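/- Suppose ω : [0,∞) → ℝⁿ is continuous with |ω|_𝒜 := sup_{t≥0} e^{-bt}|ω(t)| < ∞ and satisfies, for all t ≥ 0, |ω(t)| ≤ KL ∫_0^t e^{-α(t-s)+μs} e^{-θs} |ω(s)| ds + KL ∫_t^∞ e^{α(t-s)+μs} e^{-θs} |ω(s)| ds, where K ≥ 1, L > 0, α > 0, μ ≥ 0, θ ≥ μ, b > 0, α + μ - θ + b > 0, α - μ + θ - b > 0, and KL/(α+μ-θ+b) + KL/(α-μ+θ-b) < 1. Then ω(t) = 0 for all t ≥ 0. -/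

import Mathlib

set_option maxHeartbeats 1000000


open Real MeasureTheory intervalIntegral

lemma aux_int_exp (c t : ℝ) (hc : c ≠ 0) :
    ∫ s in (0:ℝ)..t, exp (c * s) = (exp (c * t) - 1) / c := by
  have h : ∀ s ∈ Set.uIcc (0:ℝ) t, HasDerivAt (fun x => exp (c * x) / c) (exp (c * s)) s := by
    intro s _
    have h1 : HasDerivAt (fun x => exp (c * x)) (exp (c * s) * c) s := by
      simpa using ((hasDerivAt_id s).const_mul c).exp
    simpa [mul_div_cancel_right₀ _ hc] using h1.div_const c
  have h2 := intervalIntegral.integral_eq_sub_of_hasDerivAt h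
    (by apply Continuous.intervalIntegrable; fun_prop)
  rw [h2]
  simp
  ring

lemma aux_int_exp_Ioi (c t : ℝ) (hc : 0 < c) :
    ∫ s in Set.Ioi t, exp (-(c * s)) = exp (-(c * t)) / c := by
  have hint : IntegrableOn (fun x => exp (-(c * x))) (Set.Ioi t) := by
    simpa [neg_mul] using exp_neg_integrableOn_Ioi t hc
  have hderiv : ∀ x ∈ Set.Ici t, HasDerivAt (fun x => -exp (-(c * x)) / c) (exp (-(c * x))) x := by
    intro x _
    have h1 : HasDerivAt (fun x => exp (-(c * x))) (exp (-(c * x)) * -c) x := by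
      simpa using (((hasDerivAt_id x).const_mul c).neg).exp
    have h2 := (h1.neg).div_const c
    rw [show -(exp (-(c * x)) * -c) / c = exp (-(c * x)) by
      rw [mul_neg, neg_neg, mul_div_assoc, div_self hc.ne', mul_one]] at h2
    exact h2
  have htend : Filter.Tendsto (fun x => -exp (-(c * x)) / c) Filter.atTop (nhds 0) := by
    have h0 : Filter.Tendsto (fun x : ℝ => exp (-(c * x))) Filter.atTop (nhds 0) := by
      apply Real.tendsto_exp_atBot.comp
      rw [show (fun x : ℝ => -(c * x)) = (fun x : ℝ => (-c) * x) by funext x; ring]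
      exact (Filter.tendsto_const_mul_atBot_of_neg (by linarith)).mpr Filter.tendsto_id
    simpa using (h0.neg).div_const c
  have h3 := integral_Ioi_of_hasDerivAt_of_tendsto' hderiv hint htend
  rw [h3]
  ring

lemma exp_triple (M x y z w : ℝ) (h : x + y + z = w) :
    Real.exp x * Real.exp y * (M * Real.exp z) = M * Real.exp w := by
  have h5 : Real.exp w = Real.exp x * Real.exp y * Real.exp z := by
    rw [← Real.exp_add, ← Real.exp_add, h]
  rw [h5]; ring

theorem stmt_9 {E : Type*} [NormedAddCommGroup E] [NormedSpace ℝ E]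
    (K L α μ θ b : ℝ)
    (hK : 1 ≤ K) (hL : 0 < L) (hα : 0 < α) (hμ : 0 ≤ μ) (hθμ : μ ≤ θ) (hb : 0 < b)
    (h1 : 0 < α + μ - θ + b) (h2 : 0 < α - μ + θ - b)
    (hq : K * L / (α + μ - θ + b) + K * L / (α - μ + θ - b) < 1)
    (ω : ℝ → E) (hcont : ContinuousOn ω (Set.Ici 0))
    (hbdd : BddAbove (Set.range fun t : {t : ℝ // 0 ≤ t} => exp (-b * t.1) * ‖ω t.1‖))
    (hineq : ∀ t : ℝ, 0 ≤ t →
      ‖ω t‖ ≤ K * L * (∫ s in (0:ℝ)..t, exp (-α * (t - s) + μ * s) * exp (-θ * s) * ‖ω s‖)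
        + K * L * ∫ s in Set.Ioi t, exp (α * (t - s) + μ * s) * exp (-θ * s) * ‖ω s‖) :
    ∀ t : ℝ, 0 ≤ t → ω t = 0 := by
  set c₁ : ℝ := α + μ - θ + b with hc₁
  set c₂ : ℝ := α - μ + θ - b with hc₂
  set M : ℝ := ⨆ t : {t : ℝ // 0 ≤ t}, exp (-b * t.1) * ‖ω t.1‖ with hMdef
  have hle : ∀ t : ℝ, 0 ≤ t → exp (-b * t) * ‖ω t‖ ≤ M := fun t ht =>
    le_ciSup hbdd ⟨t, ht⟩
  have hM0 : 0 ≤ M := le_trans (by positivity) (hle 0 le_rfl)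
  have hωle : ∀ s : ℝ, 0 ≤ s → ‖ω s‖ ≤ M * exp (b * s) := by
    intro s hs
    have h := mul_le_mul_of_nonneg_right (hle s hs) (exp_pos (b * s)).le
    calc ‖ω s‖ = exp (-b * s) * ‖ω s‖ * exp (b * s) := by
          rw [mul_comm (exp (-b * s)) _, mul_assoc, ← exp_add]; simp
      _ ≤ M * exp (b * s) := h
  set q : ℝ := K * L / c₁ + K * L / c₂ with hqdef
  have hKL : 0 < K * L := by positivity
  have hkey : ∀ t : ℝ, 0 ≤ t → exp (-b * t) * ‖ω t‖ ≤ q * M := by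
    intro t ht
    have hIcc : Set.uIcc (0:ℝ) t ⊆ Set.Ici 0 := by
      rw [Set.uIcc_of_le ht]; exact fun x hx => hx.1
    have hfcont : ContinuousOn (fun s => exp (-α * (t - s) + μ * s) * exp (-θ * s) * ‖ω s‖)
        (Set.uIcc (0:ℝ) t) := by
      apply ContinuousOn.mul _ ((hcont.mono hIcc).norm)
      exact Continuous.continuousOn (by fun_prop)
    have hI1 : (∫ s in (0:ℝ)..t, exp (-α * (t - s) + μ * s) * exp (-θ * s) * ‖ω s‖)
        ≤ M * (exp (-α * t) * ((exp (c₁ * t) - 1) / c₁)) := by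
      have hmono : ∀ s ∈ Set.uIcc (0:ℝ) t,
          exp (-α * (t - s) + μ * s) * exp (-θ * s) * ‖ω s‖
            ≤ M * (exp (-α * t) * exp (c₁ * s)) := by
        intro s hs
        have hs0 : 0 ≤ s := hIcc hs
        have h3 : exp (-α * (t - s) + μ * s) * exp (-θ * s) * ‖ω s‖
            ≤ exp (-α * (t - s) + μ * s) * exp (-θ * s) * (M * exp (b * s)) :=
          mul_le_mul_of_nonneg_left (hωle s hs0) (by positivity)
        refine h3.trans (le_of_eq ?_)
        rw [show M * (exp (-α * t) * exp (c₁ * s)) = M * exp (-α * t + c₁ * s) from by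
          rw [← Real.exp_add]]
        exact exp_triple M _ _ _ _ (by rw [hc₁]; ring)
      calc (∫ s in (0:ℝ)..t, exp (-α * (t - s) + μ * s) * exp (-θ * s) * ‖ω s‖)
          ≤ ∫ s in (0:ℝ)..t, M * (exp (-α * t) * exp (c₁ * s)) := by
            apply intervalIntegral.integral_mono_on ht
            · exact hfcont.intervalIntegrable
            · exact Continuous.intervalIntegrable (by fun_prop) _ _
            · intro x hx
              exact hmono x (by rwa [Set.uIcc_of_le ht])
        _ = M * (exp (-α * t) * ((exp (c₁ * t) - 1) / c₁)) := by
            rw [intervalIntegral.integral_const_mul, intervalIntegral.integral_const_mul,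
              aux_int_exp c₁ t (ne_of_gt h1)]
    have hI2 : (∫ s in Set.Ioi t, exp (α * (t - s) + μ * s) * exp (-θ * s) * ‖ω s‖)
        ≤ M * (exp (α * t) * (exp (-(c₂ * t)) / c₂)) := by
      have hgint : Integrable (fun s => M * (exp (α * t) * exp (-(c₂ * s))))
          (volume.restrict (Set.Ioi t)) := by
        apply Integrable.const_mul
        apply Integrable.const_mul
        have := exp_neg_integrableOn_Ioi t h2; simp only [neg_mul] at this; exact this
      have h4 : (∫ s in Set.Ioi t, exp (α * (t - s) + μ * s) * exp (-θ * s) * ‖ω s‖)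
          ≤ ∫ s in Set.Ioi t, M * (exp (α * t) * exp (-(c₂ * s))) := by
        apply integral_mono_of_nonneg _ hgint
        · filter_upwards [ae_restrict_mem measurableSet_Ioi] with s hs
          have hs0 : 0 ≤ s := le_trans ht (le_of_lt hs)
          have h3 : exp (α * (t - s) + μ * s) * exp (-θ * s) * ‖ω s‖
              ≤ exp (α * (t - s) + μ * s) * exp (-θ * s) * (M * exp (b * s)) :=
            mul_le_mul_of_nonneg_left (hωle s hs0) (by positivity)
          refine h3.trans (le_of_eq ?_)
          rw [show M * (exp (α * t) * exp (-(c₂ * s))) = M * exp (α * t + -(c₂ * s)) from by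
            rw [← Real.exp_add]]
          exact exp_triple M _ _ _ _ (by rw [hc₂]; ring)
        · filter_upwards with s
          positivity
      calc (∫ s in Set.Ioi t, exp (α * (t - s) + μ * s) * exp (-θ * s) * ‖ω s‖)
          ≤ ∫ s in Set.Ioi t, M * (exp (α * t) * exp (-(c₂ * s))) := h4
        _ = M * (exp (α * t) * (exp (-(c₂ * t)) / c₂)) := by
            rw [MeasureTheory.integral_const_mul, MeasureTheory.integral_const_mul, aux_int_exp_Ioi c₂ t h2]
    have hstep : ‖ω t‖ ≤ K * L * (M * (exp (-α * t) * ((exp (c₁ * t) - 1) / c₁)))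
        + K * L * (M * (exp (α * t) * (exp (-(c₂ * t)) / c₂))) := by
      refine (hineq t ht).trans (add_le_add ?_ ?_)
      · exact mul_le_mul_of_nonneg_left hI1 hKL.le
      · exact mul_le_mul_of_nonneg_left hI2 hKL.le
    have e1 : exp (-α * t) * ((exp (c₁ * t) - 1) / c₁) ≤ exp (b * t) / c₁ := by
      rw [mul_div_assoc']
      apply (div_le_div_iff_of_pos_right h1).mpr
      have ha : exp (-α * t) * exp (c₁ * t) = exp ((μ - θ + b) * t) := by
        rw [← Real.exp_add, hc₁]; ring_nf
      have hb' : exp ((μ - θ + b) * t) ≤ exp (b * t) := by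
        apply Real.exp_le_exp.mpr
        nlinarith [mul_nonneg (sub_nonneg.mpr hθμ) ht]
      nlinarith [exp_pos (-α * t)]
    have e2 : exp (α * t) * (exp (-(c₂ * t)) / c₂) ≤ exp (b * t) / c₂ := by
      rw [mul_div_assoc', ← Real.exp_add]
      apply (div_le_div_iff_of_pos_right h2).mpr
      apply Real.exp_le_exp.mpr
      rw [hc₂]
      nlinarith [mul_nonneg (sub_nonneg.mpr hθμ) ht]
    have hfinal : K * L * (M * (exp (-α * t) * ((exp (c₁ * t) - 1) / c₁)))
        + K * L * (M * (exp (α * t) * (exp (-(c₂ * t)) / c₂))) ≤ q * M * exp (b * t) := by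
      have g1 := mul_le_mul_of_nonneg_left (mul_le_mul_of_nonneg_left e1 hM0) hKL.le
      have g2 := mul_le_mul_of_nonneg_left (mul_le_mul_of_nonneg_left e2 hM0) hKL.le
      have heq : K * L * (M * (exp (b * t) / c₁)) + K * L * (M * (exp (b * t) / c₂))
          = q * M * exp (b * t) := by
        rw [hqdef]; field_simp
      linarith
    have h6 : ‖ω t‖ ≤ q * M * exp (b * t) := hstep.trans hfinal
    calc exp (-b * t) * ‖ω t‖ ≤ exp (-b * t) * (q * M * exp (b * t)) :=
          mul_le_mul_of_nonneg_left h6 (exp_pos _).le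
      _ = q * M := by
          rw [show exp (-b * t) * (q * M * exp (b * t))
              = q * M * (exp (-b * t) * exp (b * t)) from by ring, ← Real.exp_add]
          simp
  have hsup : M ≤ q * M := ciSup_le fun ⟨t, ht⟩ => hkey t ht
  have hqlt : q < 1 := hq
  have hM0' : M ≤ 0 := by nlinarith
  intro t ht
  have h5 := hωle t ht
  have hMz : M = 0 := le_antisymm hM0' hM0
  rw [hMz, zero_mul] at h5
  exact norm_le_zero_iff.mp h5
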